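/- (Recursive form of u under the optimal baseline) With b = b*, i.e., b_t(s,a) = q_{π,t}(s,a): u_{π,T−1}(s,a) = 0 for all (s,a), and for all t ∈ {0,…,T−2} and all (s,a), u_{π,t}(s,a) = ν_{π,t}(s,a) + Σ_{s'} Σ_{a'} p(s'|s,a) · π_{t+1}(a'|s') · (π_{t+1}(a'|s')/μ*_{t+1}(a'|s')) · u_{π,t+1}(s',a'), where each summand with μ*_{t+1}(a'|s') = 0 is zero (since then π_{t+1}(a'|s')·u_{π,t+1}(s',a') = 0); equivalently, u_{π,t}(s,a) = ν_{π,t}(s,a) + Σ_{s'} p(s'|s,a)·( Σ_{a'} π_{t+1}(a'|s')√(u_{π,t+1}(s',a')) )². -/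

import Mathlib

open Finset

namespace DOpt

variable {S A : Type}

/-- A time-indexed policy: for each time step and state, a probability distribution on actions. -/
def IsPolicy [Fintype A] (μ : ℕ → S → A → ℝ) : Prop :=
  ∀ t s, (∀ a, 0 ≤ μ t s a) ∧ ∑ a, μ t s a = 1

/-- A transition probability kernel on the finite state space. -/
def IsKernel [Fintype S] (p : S → A → S → ℝ) : Prop :=
  ∀ s a, (∀ s', 0 ≤ p s a s') ∧ ∑ s', p s a s' = 1

/-- Action value `q_{π,t}(s,a)` computed with `n` remaining transitions after time `t`
(`n = T - 1 - t` in a horizon-`T` MDP). -/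
noncomputable def qval [Fintype S] [Fintype A] (p : S → A → S → ℝ) (π : ℕ → S → A → ℝ)
    (r : S → A → ℝ) : ℕ → ℕ → S → A → ℝ
  | 0, _, s, a => r s a
  | n + 1, t, s, a =>
      r s a + ∑ s', p s a s' * ∑ a', π (t + 1) s' a' * qval p π r n (t + 1) s' a'

/-- `q_{π,t}(s,a)` in the horizon-`T` MDP. -/
noncomputable def qf [Fintype S] [Fintype A] (T : ℕ) (p : S → A → S → ℝ)
    (π : ℕ → S → A → ℝ) (r : S → A → ℝ) (t : ℕ) (s : S) (a : A) : ℝ :=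
  qval p π r (T - 1 - t) t s a

/-- `v_{π,t}(s) = Σ_a π_t(a|s) q_{π,t}(s,a)`. -/
noncomputable def vf [Fintype S] [Fintype A] (T : ℕ) (p : S → A → S → ℝ)
    (π : ℕ → S → A → ℝ) (r : S → A → ℝ) (t : ℕ) (s : S) : ℝ :=
  ∑ a, π t s a * qf T p π r t s a

/-- `ν_{π,t}(s,a) = Var_{s' ∼ p(·|s,a)}(v_{π,t+1}(s'))` for `t ≤ T-2`, and `0` at `t = T-1`. -/
noncomputable def nuf [Fintype S] [Fintype A] (T : ℕ) (p : S → A → S → ℝ)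
    (π : ℕ → S → A → ℝ) (r : S → A → ℝ) (t : ℕ) (s : S) (a : A) : ℝ :=
  if t + 2 ≤ T then
    (∑ s', p s a s' * (vf T p π r (t + 1) s') ^ 2) -
      (∑ s', p s a s' * vf T p π r (t + 1) s') ^ 2
  else 0

/-- Trajectories with `n` further transitions after the first action:
`(a_t, s_{t+1}, a_{t+1}, …, s_{t+n}, a_{t+n})`. -/
def Traj (S A : Type) : ℕ → Type
  | 0 => A
  | n + 1 => A × S × Traj S A n

/-- Expectation, over trajectories generated by the behavior policy `μ` starting at time `t`
in state `s` with `n` further transitions, of a function `f` of the trajectory. -/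
noncomputable def Exp [Fintype S] [Fintype A] (p : S → A → S → ℝ) (μ : ℕ → S → A → ℝ) :
    (n : ℕ) → ℕ → S → (Traj S A n → ℝ) → ℝ
  | 0, t, s, f => ∑ a, μ t s a * f a
  | n + 1, t, s, f =>
      ∑ a, μ t s a * ∑ s', p s a s' * Exp p μ n (t + 1) s' (fun τ => f (a, s', τ))

/-- Conditional variance of a function of the trajectory, given `S_t = s`. -/
noncomputable def Var [Fintype S] [Fintype A] (p : S → A → S → ℝ) (μ : ℕ → S → A → ℝ)
    (n : ℕ) (t : ℕ) (s : S) (f : Traj S A n → ℝ) : ℝ :=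
  Exp p μ n t s (fun τ => (f τ) ^ 2) - (Exp p μ n t s f) ^ 2

/-- `b̄_t(s) = Σ_a π_t(a|s) b_t(s,a)`. -/
noncomputable def bbar [Fintype A] (π : ℕ → S → A → ℝ) (b : ℕ → S → A → ℝ)
    (t : ℕ) (s : S) : ℝ :=
  ∑ a, π t s a * b t s a

/-- The per-decision importance-sampling estimator `G^b` with baseline `b`, target policy `π`
and behavior policy `μ`, as a function of the trajectory from time `t` (with `n` further
transitions, `n = T - 1 - t`). -/
noncomputable def Gest [Fintype S] [Fintype A] (π μ : ℕ → S → A → ℝ) (r : S → A → ℝ)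
    (b : ℕ → S → A → ℝ) : (n : ℕ) → ℕ → S → Traj S A n → ℝ
  | 0, t, s, a => (π t s a / μ t s a) * (r s a - b t s a) + bbar π b t s
  | n + 1, t, s, (a, s', τ) =>
      (π t s a / μ t s a) * (r s a + Gest π μ r b n (t + 1) s' τ - b t s a) + bbar π b t s

/-- Normalization of a weight vector into a probability distribution; the uniform distribution
when the total weight vanishes. -/
noncomputable def normPol [Fintype A] (w : A → ℝ) (a : A) : ℝ :=
  if (∑ a', w a') = 0 then ((Fintype.card A : ℝ))⁻¹ else w a / ∑ a', w a'

/-- `u_{π,t}(s,a)` (with baseline `b`), defined backwards in time together with the optimal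
behavior policy `μ*`; the first argument is the number `n = T - 1 - t` of remaining
transitions after time `t`. -/
noncomputable def uAux [Fintype S] [Fintype A] (T : ℕ) (p : S → A → S → ℝ)
    (π : ℕ → S → A → ℝ) (r : S → A → ℝ) (b : ℕ → S → A → ℝ) :
    ℕ → ℕ → S → A → ℝ
  | 0, t, s, a => (qf T p π r t s a - b t s a) ^ 2
  | n + 1, t, s, a =>
      (qf T p π r t s a - b t s a) ^ 2 + nuf T p π r t s a +
        ∑ s', p s a s' *
          Var p
            (fun t' s₁ a₁ => normPol (fun a₂ =>
              π t' s₁ a₂ * Real.sqrt (uAux T p π r b (n - (t' - (t + 1))) t' s₁ a₂)) a₁)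
            n (t + 1) s'
            (Gest π
              (fun t' s₁ a₁ => normPol (fun a₂ =>
                π t' s₁ a₂ * Real.sqrt (uAux T p π r b (n - (t' - (t + 1))) t' s₁ a₂)) a₁)
              r b n (t + 1) s')
  termination_by n => n
  decreasing_by all_goals omega

/-- `u_{π,t}(s,a)` in the horizon-`T` MDP, with baseline `b`. -/
noncomputable def uf [Fintype S] [Fintype A] (T : ℕ) (p : S → A → S → ℝ)
    (π : ℕ → S → A → ℝ) (r : S → A → ℝ) (b : ℕ → S → A → ℝ) (t : ℕ) (s : S) (a : A) : ℝ :=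
  uAux T p π r b (T - 1 - t) t s a

/-- The optimal behavior policy `μ*_t(a|s) ∝ π_t(a|s) √(u_{π,t}(s,a))` tailored to the
baseline `b` (uniform when all the weights vanish). -/
noncomputable def mustar [Fintype S] [Fintype A] (T : ℕ) (p : S → A → S → ℝ)
    (π : ℕ → S → A → ℝ) (r : S → A → ℝ) (b : ℕ → S → A → ℝ) (t : ℕ) (s : S) (a : A) : ℝ :=
  normPol (fun a' => π t s a' * Real.sqrt (uf T p π r b t s a')) a

/-- Conditional expectation `E[G^b(τ^μ_{t:T-1}) | S_t = s]`. -/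
noncomputable def ExpG [Fintype S] [Fintype A] (T : ℕ) (p : S → A → S → ℝ)
    (π μ : ℕ → S → A → ℝ) (r : S → A → ℝ) (b : ℕ → S → A → ℝ) (t : ℕ) (s : S) : ℝ :=
  Exp p μ (T - 1 - t) t s (Gest π μ r b (T - 1 - t) t s)

/-- Conditional variance `Var(G^b(τ^μ_{t:T-1}) | S_t = s)`. -/
noncomputable def VarG [Fintype S] [Fintype A] (T : ℕ) (p : S → A → S → ℝ)
    (π μ : ℕ → S → A → ℝ) (r : S → A → ℝ) (b : ℕ → S → A → ℝ) (t : ℕ) (s : S) : ℝ :=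
  Var p μ (T - 1 - t) t s (Gest π μ r b (T - 1 - t) t s)

/-- Membership in the enlarged policy-search space
`Λ = {μ : ∀ t,s,a, μ_t(a|s) = 0 → π_t(a|s)·u_{π,t}(s,a) = 0}`. -/
def inLambda [Fintype S] [Fintype A] (T : ℕ) (p : S → A → S → ℝ)
    (π : ℕ → S → A → ℝ) (r : S → A → ℝ) (b : ℕ → S → A → ℝ) (μ : ℕ → S → A → ℝ) : Prop :=
  ∀ t s a, t < T → μ t s a = 0 → π t s a * uf T p π r b t s a = 0


/-- The optimal baseline `b*_t(s,a) = q_{π,t}(s,a)`. -/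
noncomputable def bstar [Fintype S] [Fintype A] (T : ℕ) (p : S → A → S → ℝ)
    (π : ℕ → S → A → ℝ) (r : S → A → ℝ) : ℕ → S → A → ℝ :=
  fun t s a => qf T p π r t s a

/-- The zero baseline: with it, `Gest` is the plain PDIS estimator `G^{PDIS}`. -/
def zerob : ℕ → S → A → ℝ := fun _ _ _ => 0


section AuxLemmas
variable {S A : Type} [Fintype S] [Fintype A]

lemma normPol_nonneg [Nonempty A] (w : A → ℝ) (hw : ∀ a, 0 ≤ w a) (a : A) :
    0 ≤ normPol w a := by
  unfold normPol
  split_ifs with h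
  · positivity
  · exact div_nonneg (hw a) (Finset.sum_nonneg fun a' _ => hw a')

lemma normPol_sum [Nonempty A] (w : A → ℝ) : ∑ a, normPol w a = 1 := by
  by_cases h : (∑ a', w a') = 0
  · simp only [normPol, if_pos h, Finset.sum_const, Finset.card_univ, nsmul_eq_mul]
    rw [mul_inv_cancel₀]
    exact_mod_cast Fintype.card_ne_zero
  · simp only [normPol, if_neg h]
    rw [← Finset.sum_div, div_self h]

variable (p : S → A → S → ℝ)

lemma Exp_add (μ : ℕ → S → A → ℝ) :
    ∀ (n t : ℕ) (s : S) (f g : Traj S A n → ℝ),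
      Exp p μ n t s (fun τ => f τ + g τ) = Exp p μ n t s f + Exp p μ n t s g
  | 0, t, s, f, g => by
      simp [Exp, mul_add, Finset.sum_add_distrib]
  | n + 1, t, s, f, g => by
      simp only [Exp]
      rw [← Finset.sum_add_distrib]
      refine Finset.sum_congr rfl fun a _ => ?_
      rw [← mul_add]
      congr 1
      rw [← Finset.sum_add_distrib]
      refine Finset.sum_congr rfl fun s' _ => ?_
      rw [← mul_add]
      congr 1
      exact Exp_add μ n (t + 1) s' _ _

lemma Exp_const_mul (μ : ℕ → S → A → ℝ) :
    ∀ (n t : ℕ) (s : S) (c : ℝ) (f : Traj S A n → ℝ),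
      Exp p μ n t s (fun τ => c * f τ) = c * Exp p μ n t s f
  | 0, t, s, c, f => by
      simp only [Exp, Finset.mul_sum]
      exact Finset.sum_congr rfl fun a _ => by ring
  | n + 1, t, s, c, f => by
      simp only [Exp, Finset.mul_sum]
      refine Finset.sum_congr rfl fun a _ => ?_
      refine Finset.sum_congr rfl fun s' _ => ?_
      rw [Exp_const_mul μ n (t + 1) s' c _]
      ring

lemma Exp_const (μ : ℕ → S → A → ℝ) (hp : IsKernel p) (hμ : IsPolicy μ) :
    ∀ (n t : ℕ) (s : S) (c : ℝ), Exp p μ n t s (fun _ => c) = c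
  | 0, t, s, c => by
      simp only [Exp, ← Finset.sum_mul]
      rw [(hμ t s).2, one_mul]
  | n + 1, t, s, c => by
      simp only [Exp]
      have h1 : ∀ a ∈ Finset.univ (α := A),
          μ t s a * ∑ s', p s a s' * Exp p μ n (t+1) s' (fun _ => c) = μ t s a * c := by
        intro a _
        congr 1
        have : ∀ s' ∈ Finset.univ (α := S),
            p s a s' * Exp p μ n (t+1) s' (fun _ => c) = p s a s' * c := by
          intro s' _
          rw [Exp_const μ hp hμ n (t+1) s' c]
        rw [Finset.sum_congr rfl this, ← Finset.sum_mul, (hp s a).2, one_mul]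
      rw [Finset.sum_congr rfl h1, ← Finset.sum_mul, (hμ t s).2, one_mul]

lemma Exp_nonneg (μ : ℕ → S → A → ℝ) (hp : IsKernel p) (hμ : IsPolicy μ) :
    ∀ (n t : ℕ) (s : S) (f : Traj S A n → ℝ), (∀ τ, 0 ≤ f τ) → 0 ≤ Exp p μ n t s f
  | 0, t, s, f, hf => by
      simp only [Exp]
      exact Finset.sum_nonneg fun a _ => mul_nonneg ((hμ t s).1 a) (hf a)
  | n + 1, t, s, f, hf => by
      simp only [Exp]
      refine Finset.sum_nonneg fun a _ => mul_nonneg ((hμ t s).1 a) ?_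
      refine Finset.sum_nonneg fun s' _ => mul_nonneg ((hp s a).1 s') ?_
      exact Exp_nonneg μ hp hμ n (t+1) s' _ fun τ => hf _

lemma Exp_congr (μ μ' : ℕ → S → A → ℝ) :
    ∀ (n t : ℕ) (s : S) (f g : Traj S A n → ℝ),
      (∀ t' s₁ a₁, t ≤ t' → t' ≤ t + n → μ t' s₁ a₁ = μ' t' s₁ a₁) →
      (∀ τ, f τ = g τ) →
      Exp p μ n t s f = Exp p μ' n t s g
  | 0, t, s, f, g, hμ, hf => by
      simp only [Exp]
      exact Finset.sum_congr rfl fun a _ => by rw [hμ t s a le_rfl (by omega), hf a]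
  | n + 1, t, s, f, g, hμ, hf => by
      simp only [Exp]
      refine Finset.sum_congr rfl fun a _ => ?_
      rw [hμ t s a le_rfl (by omega)]
      congr 1
      refine Finset.sum_congr rfl fun s' _ => ?_
      congr 1
      exact Exp_congr μ μ' n (t+1) s' _ _
        (fun t' s₁ a₁ h1 h2 => hμ t' s₁ a₁ (by omega) (by omega)) (fun τ => hf _)

lemma Gest_congr (π μ μ' : ℕ → S → A → ℝ) (r : S → A → ℝ) (b : ℕ → S → A → ℝ) :
    ∀ (n t : ℕ) (s : S) (τ : Traj S A n),
      (∀ t' s₁ a₁, t ≤ t' → t' ≤ t + n → μ t' s₁ a₁ = μ' t' s₁ a₁) →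
      Gest π μ r b n t s τ = Gest π μ' r b n t s τ
  | 0, t, s, τ, hμ => by
      simp only [Gest]
      rw [hμ t s τ le_rfl (by omega)]
  | n + 1, t, s, (a, s', τ), hμ => by
      simp only [Gest]
      rw [hμ t s a le_rfl (by omega),
        Gest_congr π μ μ' r b n (t+1) s' τ
          (fun t' s₁ a₁ h1 h2 => hμ t' s₁ a₁ (by omega) (by omega))]

lemma Exp_affine (μ : ℕ → S → A → ℝ) (hp : IsKernel p) (hμ : IsPolicy μ)
    (n t : ℕ) (s : S) (c d : ℝ) (f : Traj S A n → ℝ) :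
    Exp p μ n t s (fun τ => c * f τ + d) = c * Exp p μ n t s f + d := by
  rw [Exp_add, Exp_const_mul, Exp_const p μ hp hμ]

lemma Var_eq_exp (μ : ℕ → S → A → ℝ) (hp : IsKernel p) (hμ : IsPolicy μ)
    (n t : ℕ) (s : S) (f : Traj S A n → ℝ) :
    Var p μ n t s f = Exp p μ n t s (fun τ => (f τ - Exp p μ n t s f) ^ 2) := by
  set m := Exp p μ n t s f with hm
  have h1 : (fun τ => (f τ - m) ^ 2) = fun τ => f τ ^ 2 + ((-(2 * m)) * f τ + m ^ 2) := by
    funext τ; ring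
  rw [h1, Exp_add, Exp_add, Exp_const_mul, Exp_const p μ hp hμ]
  show Exp p μ n t s (fun τ => f τ ^ 2) - m ^ 2 = _
  ring

lemma Var_nonneg (μ : ℕ → S → A → ℝ) (hp : IsKernel p) (hμ : IsPolicy μ)
    (n t : ℕ) (s : S) (f : Traj S A n → ℝ) : 0 ≤ Var p μ n t s f := by
  rw [Var_eq_exp p μ hp hμ]
  exact Exp_nonneg p μ hp hμ n t s _ fun τ => sq_nonneg _

end AuxLemmas

section Main
variable {S A : Type} [Fintype S] [Fintype A] [Nonempty A]
variable (T : ℕ) (p : S → A → S → ℝ) (r : S → A → ℝ) (π : ℕ → S → A → ℝ)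

lemma qf_last (t : ℕ) (h : t + 1 = T) (s : S) (a : A) : qf T p π r t s a = r s a := by
  unfold qf
  rw [show T - 1 - t = 0 from by omega]
  rfl

lemma qf_rec (t : ℕ) (h : t + 2 ≤ T) (s : S) (a : A) :
    qf T p π r t s a = r s a + ∑ s', p s a s' * vf T p π r (t + 1) s' := by
  unfold qf vf qf
  rw [show T - 1 - t = (T - 1 - (t + 1)) + 1 from by omega]
  rfl

lemma weighted_var_nonneg {σ : Type} [Fintype σ] (q' : σ → ℝ) (hq0 : ∀ x, 0 ≤ q' x)
    (hq1 : ∑ x, q' x = 1) (v : σ → ℝ) :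
    (∑ x, q' x * v x) ^ 2 ≤ ∑ x, q' x * v x ^ 2 := by
  set m := ∑ x, q' x * v x with hm
  have key : ∑ x, q' x * (v x - m) ^ 2 = (∑ x, q' x * v x ^ 2) - m ^ 2 := by
    have h1 : ∀ x ∈ Finset.univ (α := σ),
        q' x * (v x - m) ^ 2 = q' x * v x ^ 2 - 2 * m * (q' x * v x) + m ^ 2 * q' x := by
      intro x _; ring
    rw [Finset.sum_congr rfl h1]
    rw [Finset.sum_add_distrib, Finset.sum_sub_distrib, ← Finset.mul_sum, ← Finset.mul_sum,
      hq1, ← hm]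
    ring
  have h2 : 0 ≤ ∑ x, q' x * (v x - m) ^ 2 :=
    Finset.sum_nonneg fun x _ => mul_nonneg (hq0 x) (sq_nonneg _)
  linarith

lemma nuf_nonneg (hp : IsKernel p) (t : ℕ) (s : S) (a : A) : 0 ≤ nuf T p π r t s a := by
  unfold nuf
  split_ifs with h
  · have := weighted_var_nonneg (p s a) (hp s a).1 (hp s a).2 (vf T p π r (t + 1))
    linarith
  · exact le_refl _

example (b : ℕ → S → A → ℝ) (t : ℕ) (s : S) (a : A) :
    uAux T p π r b 0 t s a = (qf T p π r t s a - b t s a) ^ 2 := by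
  rw [uAux]

example (b : ℕ → S → A → ℝ) (n t : ℕ) (s : S) (a : A) :
    uAux T p π r b (n + 1) t s a =
      (qf T p π r t s a - b t s a) ^ 2 + nuf T p π r t s a +
        ∑ s', p s a s' *
          Var p
            (fun t' s₁ a₁ => normPol (fun a₂ =>
              π t' s₁ a₂ * Real.sqrt (uAux T p π r b (n - (t' - (t + 1))) t' s₁ a₂)) a₁)
            n (t + 1) s'
            (Gest π
              (fun t' s₁ a₁ => normPol (fun a₂ =>
                π t' s₁ a₂ * Real.sqrt (uAux T p π r b (n - (t' - (t + 1))) t' s₁ a₂)) a₁)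
              r b n (t + 1) s') := by
  rw [uAux]


end Main

section Alg
lemma normPol_term_eq [Fintype A] [Nonempty A] (π' u : A → ℝ) (a : A) :
    π' a * ((π' a / normPol (fun a' => π' a' * Real.sqrt (u a')) a) * u a)
      = normPol (fun a' => π' a' * Real.sqrt (u a')) a *
          ((π' a / normPol (fun a' => π' a' * Real.sqrt (u a')) a) ^ 2 * u a) := by
  set m := normPol (fun a' => π' a' * Real.sqrt (u a')) a with hm
  by_cases hμ : m = 0
  · simp [hμ]
  · field_simp

lemma normPol_sq_sum [Fintype A] [Nonempty A] (π' u : A → ℝ)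
    (hπ' : ∀ a, 0 ≤ π' a) (hu : ∀ a, 0 ≤ u a) :
    ∑ a, normPol (fun a' => π' a' * Real.sqrt (u a')) a *
        ((π' a / normPol (fun a' => π' a' * Real.sqrt (u a')) a) ^ 2 * u a)
      = (∑ a, π' a * Real.sqrt (u a)) ^ 2 := by
  by_cases hS : (∑ a', π' a' * Real.sqrt (u a')) = 0
  · have hall : ∀ a ∈ Finset.univ (α := A), π' a * Real.sqrt (u a) = 0 :=
      fun a _ => by
        have := (Finset.sum_eq_zero_iff_of_nonneg
          (fun a _ => mul_nonneg (hπ' a) (Real.sqrt_nonneg _))).mp hS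
        exact this a (Finset.mem_univ a)
    have hz : ∀ a ∈ Finset.univ (α := A),
        normPol (fun a' => π' a' * Real.sqrt (u a')) a *
          ((π' a / normPol (fun a' => π' a' * Real.sqrt (u a')) a) ^ 2 * u a) = 0 := by
      intro a _
      have hterm : π' a ^ 2 * u a = 0 := by
        rcases mul_eq_zero.mp (hall a (Finset.mem_univ a)) with h | h
        · simp [h]
        · have : u a = 0 := by
            have := Real.sqrt_eq_zero (hu a) |>.mp h
            exact this
          simp [this]
      have h2 : (π' a / normPol (fun a' => π' a' * Real.sqrt (u a')) a) ^ 2 * u a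
          = (π' a ^ 2 * u a) / (normPol (fun a' => π' a' * Real.sqrt (u a')) a) ^ 2 := by
        rw [div_pow]; ring
      rw [h2, hterm, zero_div, mul_zero]
    rw [Finset.sum_eq_zero hz, hS]
    norm_num
  · rw [pow_two, Finset.sum_mul]
    refine Finset.sum_congr rfl fun a _ => ?_
    by_cases hwa : π' a * Real.sqrt (u a) = 0
    · simp [normPol, hS, hwa]
    · have hπa : π' a ≠ 0 := fun h => hwa (by simp [h])
      have hsu : Real.sqrt (u a) ≠ 0 := fun h => hwa (by simp [h])
      have husq : Real.sqrt (u a) ^ 2 = u a := Real.sq_sqrt (hu a)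
      simp only [normPol, if_neg hS]
      rw [← husq]
      field_simp
      ring
      rw [Real.sqrt_sq (Real.sqrt_nonneg _)]

end Alg


section Main2
set_option linter.unusedSectionVars false
variable {S A : Type} [Fintype S] [Fintype A] [Nonempty A]
variable (T : ℕ) (p : S → A → S → ℝ) (r : S → A → ℝ) (π : ℕ → S → A → ℝ)

lemma isPolicy_normPol (w : ℕ → S → A → ℝ) (hw : ∀ t s a, 0 ≤ w t s a) :
    IsPolicy (fun t s a => normPol (w t s) a) := fun t s =>
  ⟨fun a => normPol_nonneg _ (hw t s) a, normPol_sum _⟩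

lemma isPolicy_mustar (hπ : IsPolicy π) (b : ℕ → S → A → ℝ) :
    IsPolicy (mustar T p π r b) :=
  isPolicy_normPol (fun t s a => π t s a * Real.sqrt (uf T p π r b t s a))
    (fun t s a => mul_nonneg ((hπ t s).1 a) (Real.sqrt_nonneg _))

lemma u_nonneg (hp : IsKernel p) (hπ : IsPolicy π) (b : ℕ → S → A → ℝ) :
    ∀ (n t : ℕ) (s : S) (a : A), 0 ≤ uAux T p π r b n t s a
  | 0, t, s, a => by rw [uAux]; exact sq_nonneg _
  | n + 1, t, s, a => by
      rw [uAux]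
      refine add_nonneg (add_nonneg (sq_nonneg _) (nuf_nonneg T p r π hp t s a)) ?_
      refine Finset.sum_nonneg fun s' _ => mul_nonneg ((hp s a).1 s') ?_
      exact Var_nonneg p _ hp
        (isPolicy_normPol _ (fun t' s₁ a₂ => mul_nonneg ((hπ t' s₁).1 a₂) (Real.sqrt_nonneg _)))
        n (t + 1) s' _

lemma exp_G (hp : IsKernel p) (hπ : IsPolicy π) (μ : ℕ → S → A → ℝ) (hμ : IsPolicy μ) :
    ∀ (n t : ℕ) (s : S), t + n + 1 = T →
      Exp p μ n t s (Gest π μ r (bstar T p π r) n t s) = vf T p π r t s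
  | 0, t, s, h => by
      simp only [Exp, Gest]
      have hb : ∀ a : A, bstar T p π r t s a = r s a :=
        fun a => qf_last T p r π t (by omega) s a
      have h1 : ∀ a ∈ Finset.univ (α := A),
          μ t s a * ((π t s a / μ t s a) * (r s a - bstar T p π r t s a) +
            bbar π (bstar T p π r) t s) = μ t s a * bbar π (bstar T p π r) t s := by
        intro a _; rw [hb a]; ring
      rw [Finset.sum_congr rfl h1, ← Finset.sum_mul, (hμ t s).2, one_mul]
      rfl
  | n + 1, t, s, h => by
      simp only [Exp, Gest]
      have key : ∀ a : A,
          ∑ s', p s a s' * Exp p μ n (t + 1) s' (fun τ =>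
            (π t s a / μ t s a) * (r s a + Gest π μ r (bstar T p π r) n (t + 1) s' τ -
              bstar T p π r t s a) + bbar π (bstar T p π r) t s)
            = bbar π (bstar T p π r) t s := by
        intro a
        have h2 : ∀ s' : S, Exp p μ n (t + 1) s' (fun τ =>
            (π t s a / μ t s a) * (r s a + Gest π μ r (bstar T p π r) n (t + 1) s' τ -
              bstar T p π r t s a) + bbar π (bstar T p π r) t s)
            = (π t s a / μ t s a) * vf T p π r (t + 1) s' +
              ((π t s a / μ t s a) * (r s a - bstar T p π r t s a) +
                bbar π (bstar T p π r) t s) := by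
          intro s'
          have hfun : (fun τ =>
              (π t s a / μ t s a) * (r s a + Gest π μ r (bstar T p π r) n (t + 1) s' τ -
                bstar T p π r t s a) + bbar π (bstar T p π r) t s)
              = fun τ => (π t s a / μ t s a) * Gest π μ r (bstar T p π r) n (t + 1) s' τ +
                  ((π t s a / μ t s a) * (r s a - bstar T p π r t s a) +
                    bbar π (bstar T p π r) t s) := funext fun τ => by ring
          rw [hfun, Exp_affine p μ hp hμ, exp_G hp hπ μ hμ n (t + 1) s' (by omega)]
        simp only [h2]
        have expand : ∀ s' : S, p s a s' * ((π t s a / μ t s a) * vf T p π r (t + 1) s' +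
            ((π t s a / μ t s a) * (r s a - bstar T p π r t s a) + bbar π (bstar T p π r) t s))
            = (π t s a / μ t s a) * (p s a s' * vf T p π r (t + 1) s') +
              p s a s' * ((π t s a / μ t s a) * (r s a - bstar T p π r t s a) +
                bbar π (bstar T p π r) t s) := fun s' => by ring
        simp only [expand]
        rw [Finset.sum_add_distrib, ← Finset.mul_sum, ← Finset.sum_mul, (hp s a).2, one_mul]
        have hq : bstar T p π r t s a = r s a + ∑ s', p s a s' * vf T p π r (t + 1) s' :=
          qf_rec T p r π t (by omega) s a
        rw [hq]
        ring
      simp only [key]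
      rw [← Finset.sum_mul, (hμ t s).2, one_mul]
      rfl

end Main2

section Main3
set_option linter.unusedSectionVars false
set_option maxHeartbeats 1000000
variable {S A : Type} [Fintype S] [Fintype A] [Nonempty A]
variable (T : ℕ) (p : S → A → S → ℝ) (r : S → A → ℝ) (π : ℕ → S → A → ℝ)

lemma mustar_eq (b : ℕ → S → A → ℝ) (n t : ℕ) (h : t + n + 1 = T) (s : S) (a : A) :
    mustar T p π r b t s a
      = normPol (fun a' => π t s a' * Real.sqrt (uAux T p π r b n t s a')) a := by
  unfold mustar uf
  rw [show T - 1 - t = n from by omega]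

lemma uAux_succ (b : ℕ → S → A → ℝ) (n t : ℕ) (h : t + n + 2 = T) (s : S) (a : A) :
    uAux T p π r b (n + 1) t s a =
      (qf T p π r t s a - b t s a) ^ 2 + nuf T p π r t s a +
        ∑ s', p s a s' *
          Var p (mustar T p π r b) n (t + 1) s'
            (Gest π (mustar T p π r b) r b n (t + 1) s') := by
  rw [uAux]
  congr 1
  refine Finset.sum_congr rfl fun s' _ => ?_
  congr 1
  have hwin : ∀ (t' : ℕ) (s₁ : S) (a₁ : A), t + 1 ≤ t' → t' ≤ t + 1 + n →
      normPol (fun a₂ =>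
        π t' s₁ a₂ * Real.sqrt (uAux T p π r b (n - (t' - (t + 1))) t' s₁ a₂)) a₁
        = mustar T p π r b t' s₁ a₁ := by
    intro t' s₁ a₁ h1 h2
    unfold mustar uf
    rw [show T - 1 - t' = n - (t' - (t + 1)) from by omega]
  unfold Var
  rw [Exp_congr p _ (mustar T p π r b) n (t + 1) s' _
        (fun τ => Gest π (mustar T p π r b) r b n (t + 1) s' τ ^ 2) hwin
        (fun τ => by rw [Gest_congr π _ (mustar T p π r b) r b n (t + 1) s' τ hwin]),
      Exp_congr p _ (mustar T p π r b) n (t + 1) s' _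
        (Gest π (mustar T p π r b) r b n (t + 1) s') hwin
        (fun τ => by rw [Gest_congr π _ (mustar T p π r b) r b n (t + 1) s' τ hwin])]

lemma var_G (hp : IsKernel p) (hπ : IsPolicy π) :
    ∀ (n t : ℕ) (s : S), t + n + 1 = T →
      Var p (mustar T p π r (bstar T p π r)) n t s
          (Gest π (mustar T p π r (bstar T p π r)) r (bstar T p π r) n t s)
        = (∑ a, π t s a *
            Real.sqrt (uAux T p π r (bstar T p π r) n t s a)) ^ 2
  | 0, t, s, h => by
      have hμpol := isPolicy_mustar T p r π hπ (bstar T p π r)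
      have hb : ∀ a : A, bstar T p π r t s a = r s a :=
        fun a => qf_last T p r π t (by omega) s a
      have hu0 : ∀ a : A, uAux T p π r (bstar T p π r) 0 t s a = 0 := by
        intro a; rw [uAux]
        have : qf T p π r t s a - bstar T p π r t s a = 0 := sub_self _
        rw [this]; norm_num
      have hg : ∀ a : A,
          Gest π (mustar T p π r (bstar T p π r)) r (bstar T p π r) 0 t s a
            = bbar π (bstar T p π r) t s := by
        intro a; simp only [Gest]; rw [hb a, sub_self, mul_zero, zero_add]
      unfold Var
      simp only [Exp, hg, hu0, Real.sqrt_zero, mul_zero, Finset.sum_const_zero]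
      rw [← Finset.sum_mul, ← Finset.sum_mul, (hμpol t s).2, one_mul, one_mul]
      ring
  | n + 1, t, s, h => by
      have hμpol := isPolicy_mustar T p r π hπ (bstar T p π r)
      have hm := exp_G T p r π hp hπ _ hμpol (n + 1) t s h
      unfold Var
      rw [hm]
      simp only [Exp, Gest]
      have hW : ∀ s' : S,
          Var p (mustar T p π r (bstar T p π r)) n (t + 1) s'
              (Gest π (mustar T p π r (bstar T p π r)) r (bstar T p π r) n (t + 1) s')
            = (∑ a', π (t + 1) s' a' *
                Real.sqrt (uAux T p π r (bstar T p π r) n (t + 1) s' a')) ^ 2 :=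
        fun s' => var_G hp hπ n (t + 1) s' (by omega)
      have hinner : ∀ (a : A) (s' : S),
          Exp p (mustar T p π r (bstar T p π r)) n (t + 1) s' (fun τ =>
            ((π t s a / mustar T p π r (bstar T p π r) t s a) *
              (r s a + Gest π (mustar T p π r (bstar T p π r)) r (bstar T p π r) n (t + 1) s' τ -
                bstar T p π r t s a) + bbar π (bstar T p π r) t s) ^ 2)
          = (π t s a / mustar T p π r (bstar T p π r) t s a) ^ 2 *
              ((∑ a', π (t + 1) s' a' *
                Real.sqrt (uAux T p π r (bstar T p π r) n (t + 1) s' a')) ^ 2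
                + vf T p π r (t + 1) s' ^ 2)
            + 2 * (π t s a / mustar T p π r (bstar T p π r) t s a) *
                ((π t s a / mustar T p π r (bstar T p π r) t s a) *
                  (r s a - bstar T p π r t s a) + bbar π (bstar T p π r) t s) *
                vf T p π r (t + 1) s'
            + ((π t s a / mustar T p π r (bstar T p π r) t s a) *
                (r s a - bstar T p π r t s a) + bbar π (bstar T p π r) t s) ^ 2 := by
        intro a s'
        have hfun : (fun τ =>
            ((π t s a / mustar T p π r (bstar T p π r) t s a) *
              (r s a + Gest π (mustar T p π r (bstar T p π r)) r (bstar T p π r) n (t + 1) s' τ -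
                bstar T p π r t s a) + bbar π (bstar T p π r) t s) ^ 2)
            = fun τ =>
              (π t s a / mustar T p π r (bstar T p π r) t s a) ^ 2 *
                (Gest π (mustar T p π r (bstar T p π r)) r (bstar T p π r) n (t + 1) s' τ ^ 2)
              + ((2 * (π t s a / mustar T p π r (bstar T p π r) t s a) *
                  ((π t s a / mustar T p π r (bstar T p π r) t s a) *
                    (r s a - bstar T p π r t s a) + bbar π (bstar T p π r) t s)) *
                  Gest π (mustar T p π r (bstar T p π r)) r (bstar T p π r) n (t + 1) s' τ
                + ((π t s a / mustar T p π r (bstar T p π r) t s a) *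
                    (r s a - bstar T p π r t s a) + bbar π (bstar T p π r) t s) ^ 2) :=
          funext fun τ => by ring
        rw [hfun, Exp_add, Exp_const_mul, Exp_affine p _ hp hμpol,
          exp_G T p r π hp hπ _ hμpol n (t + 1) s' (by omega)]
        have hE2 : Exp p (mustar T p π r (bstar T p π r)) n (t + 1) s'
            (fun τ => Gest π (mustar T p π r (bstar T p π r)) r (bstar T p π r) n (t + 1) s' τ ^ 2)
            = (∑ a', π (t + 1) s' a' *
                Real.sqrt (uAux T p π r (bstar T p π r) n (t + 1) s' a')) ^ 2
              + vf T p π r (t + 1) s' ^ 2 := by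
          have h1 := hW s'
          unfold Var at h1
          rw [exp_G T p r π hp hπ _ hμpol n (t + 1) s' (by omega)] at h1
          linarith
        rw [hE2]
        ring
      simp only [hinner]
      have houter : ∀ a : A,
          ∑ s', p s a s' *
            ((π t s a / mustar T p π r (bstar T p π r) t s a) ^ 2 *
              ((∑ a', π (t + 1) s' a' *
                Real.sqrt (uAux T p π r (bstar T p π r) n (t + 1) s' a')) ^ 2
                + vf T p π r (t + 1) s' ^ 2)
            + 2 * (π t s a / mustar T p π r (bstar T p π r) t s a) *
                ((π t s a / mustar T p π r (bstar T p π r) t s a) *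
                  (r s a - bstar T p π r t s a) + bbar π (bstar T p π r) t s) *
                vf T p π r (t + 1) s'
            + ((π t s a / mustar T p π r (bstar T p π r) t s a) *
                (r s a - bstar T p π r t s a) + bbar π (bstar T p π r) t s) ^ 2)
          = (π t s a / mustar T p π r (bstar T p π r) t s a) ^ 2 *
              uAux T p π r (bstar T p π r) (n + 1) t s a
            + vf T p π r t s ^ 2 := by
        intro a
        have expand : ∀ s' : S, p s a s' *
            ((π t s a / mustar T p π r (bstar T p π r) t s a) ^ 2 *
              ((∑ a', π (t + 1) s' a' *
                Real.sqrt (uAux T p π r (bstar T p π r) n (t + 1) s' a')) ^ 2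
                + vf T p π r (t + 1) s' ^ 2)
            + 2 * (π t s a / mustar T p π r (bstar T p π r) t s a) *
                ((π t s a / mustar T p π r (bstar T p π r) t s a) *
                  (r s a - bstar T p π r t s a) + bbar π (bstar T p π r) t s) *
                vf T p π r (t + 1) s'
            + ((π t s a / mustar T p π r (bstar T p π r) t s a) *
                (r s a - bstar T p π r t s a) + bbar π (bstar T p π r) t s) ^ 2)
            = (π t s a / mustar T p π r (bstar T p π r) t s a) ^ 2 *
                (p s a s' * (∑ a', π (t + 1) s' a' *
                  Real.sqrt (uAux T p π r (bstar T p π r) n (t + 1) s' a')) ^ 2)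
              + (π t s a / mustar T p π r (bstar T p π r) t s a) ^ 2 *
                  (p s a s' * vf T p π r (t + 1) s' ^ 2)
              + (2 * (π t s a / mustar T p π r (bstar T p π r) t s a) *
                  ((π t s a / mustar T p π r (bstar T p π r) t s a) *
                    (r s a - bstar T p π r t s a) + bbar π (bstar T p π r) t s)) *
                  (p s a s' * vf T p π r (t + 1) s')
              + ((π t s a / mustar T p π r (bstar T p π r) t s a) *
                  (r s a - bstar T p π r t s a) + bbar π (bstar T p π r) t s) ^ 2 *
                  p s a s' := fun s' => by ring
        simp only [expand]
        rw [Finset.sum_add_distrib, Finset.sum_add_distrib, Finset.sum_add_distrib,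
          ← Finset.mul_sum, ← Finset.mul_sum, ← Finset.mul_sum, ← Finset.mul_sum,
          (hp s a).2, mul_one]
        have hu : uAux T p π r (bstar T p π r) (n + 1) t s a
            = nuf T p π r t s a + ∑ s', p s a s' *
                (∑ a', π (t + 1) s' a' *
                  Real.sqrt (uAux T p π r (bstar T p π r) n (t + 1) s' a')) ^ 2 := by
          rw [uAux_succ T p r π (bstar T p π r) n t (by omega) s a]
          simp only [hW]
          have hz : qf T p π r t s a - bstar T p π r t s a = 0 := sub_self _
          rw [hz]
          ring
        have hnuf : nuf T p π r t s a
            = (∑ s', p s a s' * vf T p π r (t + 1) s' ^ 2)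
              - (∑ s', p s a s' * vf T p π r (t + 1) s') ^ 2 := by
          unfold nuf
          rw [if_pos (show t + 2 ≤ T from by omega)]
        have hq : bstar T p π r t s a
            = r s a + ∑ s', p s a s' * vf T p π r (t + 1) s' :=
          qf_rec T p r π t (by omega) s a
        have hbb : bbar π (bstar T p π r) t s = vf T p π r t s := rfl
        rw [hu, hnuf, hq, hbb]
        ring
      simp only [houter]
      simp only [mul_add]
      rw [Finset.sum_add_distrib, ← Finset.sum_mul, (hμpol t s).2, one_mul]
      have hμeq : ∀ a : A, mustar T p π r (bstar T p π r) t s a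
          = normPol (fun a' => π t s a' *
              Real.sqrt (uAux T p π r (bstar T p π r) (n + 1) t s a')) a :=
        fun a => mustar_eq T p r π (bstar T p π r) (n + 1) t h s a
      simp only [hμeq]
      have hfin := normPol_sq_sum (π t s)
        (fun a' => uAux T p π r (bstar T p π r) (n + 1) t s a') (hπ t s).1
        (fun a' => u_nonneg T p r π hp hπ (bstar T p π r) (n + 1) t s a')
      have : ∑ a, normPol (fun a' => π t s a' *
            Real.sqrt (uAux T p π r (bstar T p π r) (n + 1) t s a')) a *
          ((π t s a / normPol (fun a' => π t s a' *
            Real.sqrt (uAux T p π r (bstar T p π r) (n + 1) t s a')) a) ^ 2 *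
            uAux T p π r (bstar T p π r) (n + 1) t s a)
          = (∑ a, π t s a *
              Real.sqrt (uAux T p π r (bstar T p π r) (n + 1) t s a)) ^ 2 := hfin
      rw [← this]
      exact add_sub_cancel_right _ _

end Main3


/-- Recursive form of `u` under the optimal baseline: with `b = b*`, i.e.
`b_t(s,a) = q_{π,t}(s,a)`, one has `u_{π,T−1} ≡ 0` and, for `t ∈ {0,…,T−2}`,
`u_{π,t}(s,a) = ν_{π,t}(s,a) + Σ_{s'} Σ_{a'} p(s'|s,a)·π_{t+1}(a'|s')·(π_{t+1}(a'|s')/μ*_{t+1}(a'|s'))·u_{π,t+1}(s',a')`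
(summands with `μ*_{t+1}(a'|s') = 0` being zero), equivalently
`u_{π,t}(s,a) = ν_{π,t}(s,a) + Σ_{s'} p(s'|s,a)·(Σ_{a'} π_{t+1}(a'|s')√(u_{π,t+1}(s',a')))²`. -/
theorem u_recursive_form {S A : Type} [Fintype S] [Fintype A] [Nonempty A]
    (T : ℕ) (hT : 1 ≤ T)
    (p : S → A → S → ℝ) (hp : IsKernel p)
    (r : S → A → ℝ)
    (π : ℕ → S → A → ℝ) (hπ : IsPolicy π) :
    (∀ (s : S) (a : A), uf T p π r (bstar T p π r) (T - 1) s a = 0) ∧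
    (∀ (t : ℕ), t + 2 ≤ T → ∀ (s : S) (a : A),
      uf T p π r (bstar T p π r) t s a =
        nuf T p π r t s a +
          ∑ s', ∑ a', p s a s' * (π (t + 1) s' a' *
            ((π (t + 1) s' a' / mustar T p π r (bstar T p π r) (t + 1) s' a') *
              uf T p π r (bstar T p π r) (t + 1) s' a')) ∧
      uf T p π r (bstar T p π r) t s a =
        nuf T p π r t s a +
          ∑ s', p s a s' *
            (∑ a', π (t + 1) s' a' *
              Real.sqrt (uf T p π r (bstar T p π r) (t + 1) s' a')) ^ 2) := by
  constructor
  · intro s a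
    unfold uf
    rw [show T - 1 - (T - 1) = 0 from by omega, uAux]
    have hz : qf T p π r (T - 1) s a - bstar T p π r (T - 1) s a = 0 := sub_self _
    rw [hz]
    norm_num
  · intro t ht s a
    set n := T - 2 - t with hndef
    have h2 : t + n + 2 = T := by omega
    have eq2 : uf T p π r (bstar T p π r) t s a =
        nuf T p π r t s a + ∑ s', p s a s' *
          (∑ a', π (t + 1) s' a' *
            Real.sqrt (uf T p π r (bstar T p π r) (t + 1) s' a')) ^ 2 := by
      unfold uf
      rw [show T - 1 - t = n + 1 from by omega,
        uAux_succ T p r π (bstar T p π r) n t h2 s a]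
      have hz : qf T p π r t s a - bstar T p π r t s a = 0 := sub_self _
      rw [hz]
      have hW : ∀ s' : S,
          Var p (mustar T p π r (bstar T p π r)) n (t + 1) s'
              (Gest π (mustar T p π r (bstar T p π r)) r (bstar T p π r) n (t + 1) s')
            = (∑ a', π (t + 1) s' a' *
                Real.sqrt (uAux T p π r (bstar T p π r) n (t + 1) s' a')) ^ 2 :=
        fun s' => var_G T p r π hp hπ n (t + 1) s' (by omega)
      simp only [hW]
      rw [show T - 1 - (t + 1) = n from by omega]
      ring
    refine ⟨?_, eq2⟩
    rw [eq2]
    congr 1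
    refine Finset.sum_congr rfl fun s' _ => ?_
    rw [← Finset.mul_sum]
    congr 1
    have hterm : ∀ a' : A,
        π (t + 1) s' a' * ((π (t + 1) s' a' /
            mustar T p π r (bstar T p π r) (t + 1) s' a') *
          uf T p π r (bstar T p π r) (t + 1) s' a')
        = mustar T p π r (bstar T p π r) (t + 1) s' a' *
            ((π (t + 1) s' a' / mustar T p π r (bstar T p π r) (t + 1) s' a') ^ 2 *
              uf T p π r (bstar T p π r) (t + 1) s' a') := by
      intro a'
      simp only [mustar]
      simpa using normPol_term_eq (π (t + 1) s')
        (fun a₂ => uf T p π r (bstar T p π r) (t + 1) s' a₂) a'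
    have hu' : ∀ a₂ : A, 0 ≤ uf T p π r (bstar T p π r) (t + 1) s' a₂ :=
      fun a₂ => u_nonneg T p r π hp hπ (bstar T p π r) (T - 1 - (t + 1)) (t + 1) s' a₂
    have hsum : ∑ a', mustar T p π r (bstar T p π r) (t + 1) s' a' *
          ((π (t + 1) s' a' / mustar T p π r (bstar T p π r) (t + 1) s' a') ^ 2 *
            uf T p π r (bstar T p π r) (t + 1) s' a')
        = (∑ a', π (t + 1) s' a' *
            Real.sqrt (uf T p π r (bstar T p π r) (t + 1) s' a')) ^ 2 := by
      simp only [mustar]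
      simpa using normPol_sq_sum (π (t + 1) s')
        (fun a₂ => uf T p π r (bstar T p π r) (t + 1) s' a₂) (hπ (t + 1) s').1 hu'
    simp only [hterm]
    exact hsum.symm

end DOpt
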